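/- Let Y be a Banach space, B a finite dimensional subspace of Y, k ∈ ℕ, ε > 0, and C a finite subset of Y*. Then there exists a finite dimensional subspace Z of Y containing B such that for every subspace E of Y with B ⊆ E and dim(E/B) ≤ k, there is a linear operator T : E → Z satisfying: (i) Ty = y for all y ∈ B; (ii) (1−ε)‖y‖ ≤ ‖Ty‖ ≤ (1+ε)‖y‖ for all y ∈ E; (iii) |f(Ty) − f(y)| ≤ ε‖y‖ for all y ∈ E and f ∈ C. -/

import Mathlib

open TopologicalSpace Metric Submodule

section Aux

open TopologicalSpace Metric Submodule

variable {Y : Type*} [NormedAddCommGroup Y] [NormedSpace ℝ Y]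

lemma fd_add_one (B E : Subspace ℝ Y) [FiniteDimensional ℝ E]
    (hBE : B ≤ E) (h : ¬ E ≤ B) :
    ∃ B₁ : Subspace ℝ Y, B ≤ B₁ ∧ B₁ ≤ E ∧
      Module.finrank ℝ B₁ = Module.finrank ℝ B + 1 := by
  haveI : FiniteDimensional ℝ B := Submodule.finiteDimensional_of_le hBE
  obtain ⟨v, hvE, hvB⟩ := SetLike.not_le_iff_exists.mp h
  have hv0 : v ≠ 0 := fun h0 => hvB (h0 ▸ B.zero_mem)
  refine ⟨B ⊔ span ℝ {v}, le_sup_left,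
    sup_le hBE (by simpa [span_le] using hvE), ?_⟩
  have hinf : B ⊓ span ℝ {v} = ⊥ := by
    rw [eq_bot_iff]
    rintro x ⟨hxB, hxs⟩
    obtain ⟨c, rfl⟩ := mem_span_singleton.mp hxs
    rcases eq_or_ne c 0 with rfl | hc
    · simp
    · exact absurd (B.smul_mem c⁻¹ hxB) (by simpa [smul_smul, inv_mul_cancel₀ hc])
  have := Submodule.finrank_sup_add_finrank_inf_eq B (span ℝ {v})
  rw [hinf, finrank_bot, finrank_span_singleton hv0] at this
  omega

lemma fd_intermediate (m : ℕ) : ∀ (B E : Subspace ℝ Y) [FiniteDimensional ℝ E],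
    B ≤ E → Module.finrank ℝ B + m ≤ Module.finrank ℝ E →
    ∃ H : Subspace ℝ Y, B ≤ H ∧ H ≤ E ∧
      Module.finrank ℝ H = Module.finrank ℝ B + m := by
  induction m with
  | zero => exact fun B E _ hBE _ => ⟨B, le_rfl, hBE, by simp⟩
  | succ m ih =>
    intro B E _ hBE hm
    haveI : FiniteDimensional ℝ B := Submodule.finiteDimensional_of_le hBE
    have hne : ¬ E ≤ B := by
      intro hle
      have := Submodule.finrank_mono hle
      omega
    obtain ⟨B₁, hBB₁, hB₁E, hr⟩ := fd_add_one B E hBE hne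
    obtain ⟨H, hH1, hH2, hH3⟩ := ih B₁ E hB₁E (by omega)
    exact ⟨H, hBB₁.trans hH1, hH2, by omega⟩

/-- Riesz-type good tuple. -/
lemma riesz_tuple (j : ℕ) : ∀ (B E : Subspace ℝ Y) [FiniteDimensional ℝ E],
    B ≤ E → Module.finrank ℝ E = Module.finrank ℝ B + j →
    ∃ e : Fin j → Y, (∀ i, e i ∈ E) ∧ (∀ i, ‖e i‖ = 1) ∧
      (E ≤ B ⊔ span ℝ (Set.range e)) ∧
      ∀ b ∈ B, ∀ t : Fin j → ℝ, ∀ i,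
        |t i| ≤ (3:ℝ)^j * ‖b + ∑ i, t i • e i‖ := by
  induction j with
  | zero =>
    intro B E _ hBE hr
    have hEB : E = B := (Submodule.eq_of_le_of_finrank_le hBE (by omega)).symm
    exact ⟨Fin.elim0, fun i => i.elim0, fun i => i.elim0,
      by simpa [hEB] using le_sup_left, fun b hb t i => i.elim0⟩
  | succ j ih =>
    intro B E _ hBE hr
    haveI : FiniteDimensional ℝ B := Submodule.finiteDimensional_of_le hBE
    obtain ⟨H, hBH, hHE, hrH⟩ := fd_intermediate j B E hBE (by omega)
    haveI : FiniteDimensional ℝ H := Submodule.finiteDimensional_of_le hHE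
    obtain ⟨e', he'E, he'n, he'span, he'bd⟩ := ih B H hBH hrH
    have hHE' : ¬ E ≤ H := by
      intro hle
      have := Submodule.finrank_mono hle
      omega
    obtain ⟨v, hvE, hvH⟩ := SetLike.not_le_iff_exists.mp hHE'
    set F : Subspace ℝ ↥E := H.comap E.subtype with hF
    haveI : FiniteDimensional ℝ F :=
      Module.Finite.equiv (Submodule.comapSubtypeEquivOfLe hHE).symm
    have hFc : IsClosed (F : Set ↥E) := Submodule.closed_of_finiteDimensional F
    have hex : ∃ x : ↥E, x ∉ F := ⟨⟨v, hvE⟩, by simpa [hF] using hvH⟩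
    obtain ⟨x₀, hx₀, hx₀far⟩ := riesz_lemma hFc hex (r := 1/2) (by norm_num)
    have hx0 : x₀ ≠ 0 := fun h0 => hx₀ (h0 ▸ F.zero_mem)
    have hnx0 : ‖x₀‖ ≠ 0 := norm_ne_zero_iff.mpr hx0
    have hpos : (0:ℝ) < ‖x₀‖ := lt_of_le_of_ne (norm_nonneg _) (Ne.symm hnx0)
    set u : ↥E := ‖x₀‖⁻¹ • x₀ with hu
    have hun : ‖u‖ = 1 := by
      rw [hu, norm_smul, norm_inv, norm_norm, inv_mul_cancel₀ hnx0]
    have hunY : ‖(u : Y)‖ = 1 := hun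
    have hufarE : ∀ y : ↥E, y ∈ F → (1/2:ℝ) ≤ ‖u - y‖ := by
      intro y hy
      have h2 := hx₀far _ (F.smul_mem ‖x₀‖ hy)
      have h3 : u - y = ‖x₀‖⁻¹ • (x₀ - ‖x₀‖ • y) := by
        rw [smul_sub, smul_smul, inv_mul_cancel₀ hnx0, one_smul, hu]
      rw [h3, norm_smul, norm_inv, norm_norm]
      have h4 := mul_le_mul_of_nonneg_left h2 (le_of_lt (inv_pos.mpr hpos))
      calc (1/2:ℝ) = ‖x₀‖⁻¹ * (1/2 * ‖x₀‖) := by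
            rw [mul_comm (1/2:ℝ), ← mul_assoc, inv_mul_cancel₀ hnx0, one_mul]
        _ ≤ ‖x₀‖⁻¹ * ‖x₀ - ‖x₀‖ • y‖ := h4
    have hufar : ∀ y ∈ H, (1/2:ℝ) ≤ ‖(u:Y) - y‖ := by
      intro y hy
      have h5 := hufarE ⟨y, hHE hy⟩ (by simpa [hF] using hy)
      have h6 : ‖u - (⟨y, hHE hy⟩ : ↥E)‖ = ‖(u:Y) - y‖ := rfl
      rwa [h6] at h5
    have huH : (u:Y) ∉ H := by
      intro hmem
      have := hufar _ hmem
      simp only [sub_self, norm_zero] at this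
      linarith only [this]
    have hu0 : (u:Y) ≠ 0 := by
      intro h0
      rw [h0, norm_zero] at hunY
      linarith only [hunY]
    set e : Fin (j+1) → Y := Fin.snoc e' (u : Y) with he
    refine ⟨e, ?_, ?_, ?_, ?_⟩
    · intro i
      refine Fin.lastCases ?_ (fun i => ?_) i
      · simpa [he] using u.2
      · simpa [he] using hHE (he'E i)
    · intro i
      refine Fin.lastCases ?_ (fun i => ?_) i
      · simpa [he] using hunY
      · simpa [he] using he'n i
    · -- span
      have h1 : H ⊔ span ℝ {(u:Y)} = E := by
        apply Submodule.eq_of_le_of_finrank_le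
        · exact sup_le hHE (by simpa [span_le] using u.2)
        · have hinf : H ⊓ span ℝ {(u:Y)} = ⊥ := by
            rw [eq_bot_iff]
            rintro x ⟨hxH, hxs⟩
            obtain ⟨c, rfl⟩ := mem_span_singleton.mp hxs
            rcases eq_or_ne c 0 with rfl | hc
            · simp
            · exact absurd (H.smul_mem c⁻¹ hxH)
                (by simpa [smul_smul, inv_mul_cancel₀ hc] using huH)
          have h7 := Submodule.finrank_sup_add_finrank_inf_eq H (span ℝ {(u:Y)})
          rw [hinf, finrank_bot, finrank_span_singleton hu0] at h7
          omega
      have h2 : span ℝ (Set.range e') ⊔ span ℝ {(u:Y)} ≤ span ℝ (Set.range e) := by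
        apply sup_le
        · apply span_mono
          rintro x ⟨i, rfl⟩
          exact ⟨i.castSucc, by simp [he]⟩
        · simp only [span_le, Set.singleton_subset_iff]
          exact subset_span ⟨Fin.last j, by simp [he]⟩
      calc E = H ⊔ span ℝ {(u:Y)} := h1.symm
        _ ≤ (B ⊔ span ℝ (Set.range e')) ⊔ span ℝ {(u:Y)} := sup_le_sup_right he'span _
        _ ≤ B ⊔ span ℝ (Set.range e) := by
            rw [sup_assoc]
            exact sup_le_sup_left h2 _
    · -- bound
      intro b hb t i
      set w : Y := b + ∑ i : Fin j, t i.castSucc • e' i with hw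
      set x : Y := b + ∑ i, t i • e i with hx
      have hsum : ∑ i, t i • e i
          = (∑ i : Fin j, t i.castSucc • e' i) + t (Fin.last j) • (u:Y) := by
        rw [Fin.sum_univ_castSucc]
        simp [he]
      have hxw : x = w + t (Fin.last j) • (u:Y) := by
        rw [hx, hsum, hw]; abel
      have hmemH : w ∈ H :=
        H.add_mem (hBH hb) (Submodule.sum_mem _ fun i _ => H.smul_mem _ (he'E i))
      have hlast : |t (Fin.last j)| ≤ 2 * ‖x‖ := by
        rcases eq_or_ne (t (Fin.last j)) 0 with h0 | h0
        · rw [h0, abs_zero]; positivity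
        · set y : Y := (-(t (Fin.last j))⁻¹) • w with hy
          have hyH : y ∈ H := H.smul_mem _ hmemH
          have key : t (Fin.last j) • ((u:Y) - y) = x := by
            have hty : t (Fin.last j) • y = -w := by
              rw [hy, smul_smul, mul_neg, mul_inv_cancel₀ h0, neg_one_smul]
            rw [smul_sub, hty, hxw]; abel
          have h8 := hufar y hyH
          have h9 : |t (Fin.last j)| * (1/2) ≤ |t (Fin.last j)| * ‖(u:Y) - y‖ :=
            mul_le_mul_of_nonneg_left h8 (abs_nonneg _)
          rw [← Real.norm_eq_abs, ← norm_smul, key] at h9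
          rw [Real.norm_eq_abs] at h9
          linarith only [h9]
      refine Fin.lastCases ?_ (fun i => ?_) i
      · calc |t (Fin.last j)| ≤ 2 * ‖x‖ := hlast
          _ ≤ 3^(j+1) * ‖x‖ := by
              have h23 : (2:ℝ) ≤ 3^(j+1) := by
                calc (2:ℝ) ≤ 3 := by norm_num
                  _ ≤ 3^(j+1) := le_self_pow₀ (by norm_num) (Nat.succ_ne_zero j)
              exact mul_le_mul_of_nonneg_right h23 (norm_nonneg _)
      · have hbd := he'bd b hb (fun i => t i.castSucc) i
        have hxx : ‖w‖ ≤ 3 * ‖x‖ := by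
          have hwx : w = x - t (Fin.last j) • (u:Y) := by rw [hxw]; abel
          rw [hwx]
          calc ‖x - t (Fin.last j) • (u:Y)‖
              ≤ ‖x‖ + ‖t (Fin.last j) • (u:Y)‖ := norm_sub_le _ _
            _ = ‖x‖ + |t (Fin.last j)| := by
                rw [norm_smul, Real.norm_eq_abs, hunY, mul_one]
            _ ≤ ‖x‖ + 2 * ‖x‖ := by linarith only [hlast]
            _ = 3 * ‖x‖ := by ring
        calc |t i.castSucc| ≤ 3^j * ‖w‖ := hbd
          _ ≤ 3^j * (3 * ‖x‖) := mul_le_mul_of_nonneg_left hxx (by positivity)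
          _ = 3^(j+1) * ‖x‖ := by ring

set_option maxHeartbeats 2000000 in
set_option synthInstance.maxHeartbeats 1000000 in
lemma main_j [CompleteSpace Y] (B : Subspace ℝ Y) [FiniteDimensional ℝ B] (j : ℕ)
    (ε : ℝ) (hε : 0 < ε) (C : Finset (Y →L[ℝ] ℝ)) :
    ∃ Z : Subspace ℝ Y, FiniteDimensional ℝ Z ∧ B ≤ Z ∧
      ∀ E : Subspace ℝ Y, B ≤ E → FiniteDimensional ℝ E →
        Module.finrank ℝ E = Module.finrank ℝ B + j →
        ∃ T : E →ₗ[ℝ] Z,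
          (∀ e : E, (e : Y) ∈ B → ((T e : Y) = (e : Y))) ∧
          (∀ e : E, (1 - ε) * ‖(e : Y)‖ ≤ ‖(T e : Y)‖ ∧ ‖(T e : Y)‖ ≤ (1 + ε) * ‖(e : Y)‖) ∧
          (∀ e : E, ∀ f ∈ C, |f ((T e : Y)) - f ((e : Y))| ≤ ε * ‖(e : Y)‖) := by
  classical
  set bb : Module.Basis (Fin (Module.finrank ℝ B)) ℝ B := Module.finBasis ℝ B with hbb
  set ℓ : ↥B →L[ℝ] (Fin (Module.finrank ℝ B) → ℝ) :=
    LinearMap.toContinuousLinearMap bb.equivFun.toLinearMap with hℓ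
  set M : ℝ := ‖ℓ‖ with hM
  have hM0 : 0 ≤ M := by rw [hM]; exact norm_nonneg ℓ
  have hcoord : ∀ (v : ↥B) a, |bb.equivFun v a| ≤ M * ‖v‖ := by
    intro v a
    calc |bb.equivFun v a| = ‖(ℓ v) a‖ := rfl
      _ ≤ ‖ℓ v‖ := norm_le_pi_norm _ a
      _ ≤ M * ‖v‖ := ℓ.le_opNorm v
  set K : ℝ := 3^j with hK
  have hK0 : (0:ℝ) ≤ K := by positivity
  set K' : ℝ := max K (M * (1 + j * K)) with hK'
  have hK'0 : 0 ≤ K' := le_trans hK0 (le_max_left _ _)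
  set L : ℝ := (∑ a, ‖(bb a : Y)‖) + j with hL
  have hL0 : 0 ≤ L := by
    apply add_nonneg _ (Nat.cast_nonneg j)
    exact Finset.sum_nonneg fun a _ => norm_nonneg _
  set S : ℝ := K' + j * K + 1 with hS
  have hS0 : 0 < S := by positivity
  set D : ℝ := 2 * L + 1 with hD
  have hD0 : 0 < D := by positivity
  set δ : ℝ := ε / (D * S) with hδ
  have hδ0 : 0 < δ := by positivity
  set δ' : ℝ := 2 * L * δ + δ with hδ'def
  have hδ'eq : δ' = ε / S := by
    rw [hδ'def, hδ]
    field_simp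
    ring
  have hδδ' : δ ≤ δ' := by nlinarith [mul_nonneg (mul_nonneg (by norm_num : (0:ℝ) ≤ 2) hL0) hδ0.le]
  have hkey : ∀ c : ℝ, 0 ≤ c → c ≤ S → δ' * c ≤ ε := by
    intro c hc hcS
    rw [hδ'eq, div_mul_eq_mul_div, div_le_iff₀ hS0]
    nlinarith
  have hK'S : K' ≤ S := by nlinarith [mul_nonneg (Nat.cast_nonneg j : (0:ℝ) ≤ j) hK0]
  have hjKS : j * K ≤ S := by nlinarith
  -- the model coordinate space
  set vec : (Fin j → Y) → ((Fin (Module.finrank ℝ B) → ℝ) × (Fin j → ℝ)) → Y :=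
    fun e p => (∑ a, p.1 a • (bb a : Y)) + ∑ i, p.2 i • e i with hvec
  have vec_smul : ∀ e (r : ℝ) p, vec e (r • p) = r • vec e p := by
    intro e r p
    simp only [hvec, Prod.smul_fst, Prod.smul_snd, Pi.smul_apply, smul_eq_mul, smul_add,
      Finset.smul_sum, mul_smul]
  have vec_sub : ∀ e (p q : ((Fin (Module.finrank ℝ B) → ℝ) × (Fin j → ℝ))), vec e (p - q) = vec e p - vec e q := by
    intro e p q
    simp only [hvec, Prod.fst_sub, Prod.snd_sub, Pi.sub_apply, sub_smul,
      Finset.sum_sub_distrib]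
    abel
  have vec_zero : ∀ e, vec e 0 = 0 := by
    intro e; simp [hvec]
  have vec_norm : ∀ e, (∀ i : Fin j, ‖e i‖ ≤ 1) → ∀ p : ((Fin (Module.finrank ℝ B) → ℝ) × (Fin j → ℝ)), ‖vec e p‖ ≤ L * ‖p‖ := by
    intro e he p
    have h1 : ‖vec e p‖ ≤ (∑ a, ‖p.1 a • (bb a : Y)‖) + ∑ i, ‖p.2 i • e i‖ :=
      le_trans (norm_add_le _ _) (add_le_add (norm_sum_le _ _) (norm_sum_le _ _))
    have h2 : (∑ a, ‖p.1 a • (bb a : Y)‖) ≤ ∑ a, ‖(bb a : Y)‖ * ‖p‖ := by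
      refine Finset.sum_le_sum fun a _ => ?_
      rw [norm_smul, mul_comm]
      exact mul_le_mul_of_nonneg_left
        (le_trans (norm_le_pi_norm p.1 a) (norm_fst_le p)) (norm_nonneg _)
    have h3 : (∑ i, ‖p.2 i • e i‖) ≤ ∑ _i : Fin j, ‖p‖ := by
      refine Finset.sum_le_sum fun i _ => ?_
      rw [norm_smul]
      calc ‖p.2 i‖ * ‖e i‖ ≤ ‖p.2 i‖ * 1 := by
            exact mul_le_mul_of_nonneg_left (he i) (norm_nonneg _)
        _ = ‖p.2 i‖ := mul_one _
        _ ≤ ‖p‖ := le_trans (norm_le_pi_norm p.2 i) (norm_snd_le p)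
    have h4 : (∑ a, ‖(bb a : Y)‖ * ‖p‖) + ∑ _i : Fin j, ‖p‖ = L * ‖p‖ := by
      rw [← Finset.sum_mul, Finset.sum_const, Finset.card_univ, Fintype.card_fin, hL,
        nsmul_eq_mul]
      ring
    linarith [add_le_add h2 h3]
  -- finite net on the unit ball of P
  obtain ⟨N, hNfin, hNcov⟩ := Metric.totallyBounded_iff.mp
    ((isCompact_closedBall (0 : ((Fin (Module.finrank ℝ B) → ℝ) × (Fin j → ℝ))) 1).totallyBounded) δ hδ0
  haveI : Fintype ↥N := hNfin.fintype
  set Θ : (Fin j → Y) → ((↥N → ℝ) × (↥C × Fin j → ℝ)) :=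
    fun e => (fun q => ‖vec e (q : ((Fin (Module.finrank ℝ B) → ℝ) × (Fin j → ℝ)))‖, fun ci => (ci.1 : Y →L[ℝ] ℝ) (e ci.2)) with hΘ
  set Adm : Set (Fin j → Y) := {e | ∀ i, ‖e i‖ ≤ 1} with hAdm
  set A : Set ((↥N → ℝ) × (↥C × Fin j → ℝ)) := Θ '' Adm with hA
  set RN : ℝ := ∑ q ∈ hNfin.toFinset, ‖q‖ with hRN
  set RC : ℝ := ∑ f ∈ C, ‖f‖ with hRC
  have hRN0 : 0 ≤ RN := Finset.sum_nonneg fun q _ => norm_nonneg _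
  have hRC0 : 0 ≤ RC := Finset.sum_nonneg fun f _ => norm_nonneg _
  set R : ℝ := L * RN + RC + 1 with hR
  have hR0 : 0 ≤ R := by positivity
  have hAbd : A ⊆ Metric.closedBall 0 R := by
    rintro w ⟨e, heAdm, rfl⟩
    rw [mem_closedBall_zero_iff, Prod.norm_def]
    apply max_le
    · rw [pi_norm_le_iff_of_nonneg hR0]
      intro q
      have hq1 : ‖(q:((Fin (Module.finrank ℝ B) → ℝ) × (Fin j → ℝ)))‖ ≤ RN := by
        rw [hRN]
        refine Finset.single_le_sum (f := fun r => ‖r‖) (fun r _ => norm_nonneg _) ?_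
        exact hNfin.mem_toFinset.mpr q.2
      have : ‖vec e (q:((Fin (Module.finrank ℝ B) → ℝ) × (Fin j → ℝ)))‖ ≤ L * RN :=
        le_trans (vec_norm e heAdm (q:((Fin (Module.finrank ℝ B) → ℝ) × (Fin j → ℝ)))) (mul_le_mul_of_nonneg_left hq1 hL0)
      rw [Real.norm_eq_abs, abs_of_nonneg (norm_nonneg _)]
      linarith
    · rw [pi_norm_le_iff_of_nonneg hR0]
      rintro ⟨f, i⟩
      have h1 : ‖(f : Y →L[ℝ] ℝ) (e i)‖ ≤ ‖(f : Y →L[ℝ] ℝ)‖ * ‖e i‖ :=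
        ContinuousLinearMap.le_opNorm _ _
      have h2 : ‖(f : Y →L[ℝ] ℝ)‖ ≤ RC := by
        rw [hRC]
        exact Finset.single_le_sum (f := fun g => ‖g‖) (fun g _ => norm_nonneg g) f.2
      have h3 : ‖(f : Y →L[ℝ] ℝ)‖ * ‖e i‖ ≤ ‖(f : Y →L[ℝ] ℝ)‖ * 1 :=
        mul_le_mul_of_nonneg_left (heAdm i) (norm_nonneg _)
      calc ‖(f : Y →L[ℝ] ℝ) (e i)‖ ≤ ‖(f : Y →L[ℝ] ℝ)‖ := by linarith
        _ ≤ R := by rw [hR]; nlinarith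
  have htb : TotallyBounded A :=
    TotallyBounded.subset hAbd (isCompact_closedBall _ _).totallyBounded
  obtain ⟨t, htA, htfin, htcov⟩ :=
    totallyBounded_iff_subset.mp htb _ (Metric.dist_mem_uniformity hδ0)
  have hrepex : ∀ w, ∃ e, e ∈ Adm ∧ (w ∈ t → Θ e = w) := by
    intro w
    by_cases hw : w ∈ t
    · obtain ⟨e, he, heq⟩ := htA hw
      exact ⟨e, he, fun _ => heq⟩
    · exact ⟨fun _ => 0, fun i => by simp [hAdm], fun h => absurd h hw⟩
  choose rep hrepAdm hrepΘ using hrepex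
  set U : Set Y := ⋃ w ∈ t, Set.range (rep w) with hU
  have hUfin : U.Finite := htfin.biUnion fun w _ => Set.finite_range _
  haveI : FiniteDimensional ℝ (span ℝ U) := FiniteDimensional.span_of_finite ℝ hUfin
  refine ⟨B ⊔ span ℝ U, inferInstance, le_sup_left, ?_⟩
  intro E hBE hfinE hrank
  haveI := hfinE
  obtain ⟨e, heE, hen, hespan, hebd⟩ := riesz_tuple j B E hBE hrank
  have heAdm : e ∈ Adm := fun i => (hen i).le
  have hΘA : Θ e ∈ A := ⟨e, heAdm, rfl⟩
  obtain ⟨w, hwt, hwclose⟩ := Set.mem_iUnion₂.mp (htcov hΘA)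
  have hwclose' : dist (Θ e) w < δ := hwclose
  set z : Fin j → Y := rep w with hzdef
  have hzAdm : z ∈ Adm := hrepAdm w
  have hΘz : Θ z = w := hrepΘ w hwt
  rw [← hΘz] at hwclose'
  -- componentwise closeness
  have hcomp1 : ∀ q : ↥N, |‖vec e (q:((Fin (Module.finrank ℝ B) → ℝ) × (Fin j → ℝ)))‖ - ‖vec z (q:((Fin (Module.finrank ℝ B) → ℝ) × (Fin j → ℝ)))‖| ≤ δ := by
    intro q
    have h1 : dist ((Θ e).1 q) ((Θ z).1 q) ≤ dist (Θ e) (Θ z) := by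
      refine le_trans (dist_le_pi_dist _ _ q) ?_
      rw [Prod.dist_eq]
      exact le_max_left _ _
    rw [hΘ] at h1
    simp only [Real.dist_eq] at h1
    exact le_trans h1 hwclose'.le
  have hcomp2 : ∀ (f : Y →L[ℝ] ℝ) (hf : f ∈ C) (i : Fin j), |f (e i) - f (z i)| ≤ δ := by
    intro f hf i
    have h1 : dist ((Θ e).2 ⟨⟨f, hf⟩, i⟩) ((Θ z).2 ⟨⟨f, hf⟩, i⟩) ≤ dist (Θ e) (Θ z) := by
      refine le_trans (dist_le_pi_dist _ _ _) ?_
      rw [Prod.dist_eq]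
      exact le_max_right _ _
    rw [hΘ] at h1
    simp only [Real.dist_eq] at h1
    exact le_trans h1 hwclose'.le
  -- the key uniform estimate
  have hEst : ∀ p : ((Fin (Module.finrank ℝ B) → ℝ) × (Fin j → ℝ)), |‖vec e p‖ - ‖vec z p‖| ≤ δ' * ‖p‖ := by
    have hEst1 : ∀ p : ((Fin (Module.finrank ℝ B) → ℝ) × (Fin j → ℝ)), ‖p‖ ≤ 1 → |‖vec e p‖ - ‖vec z p‖| ≤ δ' := by
      intro p hp
      have hpmem : p ∈ Metric.closedBall (0:((Fin (Module.finrank ℝ B) → ℝ) × (Fin j → ℝ))) 1 := by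
        rwa [mem_closedBall_zero_iff]
      obtain ⟨q, hqN, hq⟩ := Set.mem_iUnion₂.mp (hNcov hpmem)
      rw [Metric.mem_ball] at hq
      have hdist : ‖p - q‖ ≤ δ := by
        rw [← dist_eq_norm]; exact hq.le
      have h1 : |‖vec e p‖ - ‖vec e q‖| ≤ L * δ :=
        calc |‖vec e p‖ - ‖vec e q‖| ≤ ‖vec e p - vec e q‖ := abs_norm_sub_norm_le _ _
          _ = ‖vec e (p - q)‖ := by rw [vec_sub]
          _ ≤ L * ‖p - q‖ := vec_norm e heAdm _
          _ ≤ L * δ := mul_le_mul_of_nonneg_left hdist hL0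
      have h2 : |‖vec z p‖ - ‖vec z q‖| ≤ L * δ :=
        calc |‖vec z p‖ - ‖vec z q‖| ≤ ‖vec z p - vec z q‖ := abs_norm_sub_norm_le _ _
          _ = ‖vec z (p - q)‖ := by rw [vec_sub]
          _ ≤ L * ‖p - q‖ := vec_norm z hzAdm _
          _ ≤ L * δ := mul_le_mul_of_nonneg_left hdist hL0
      have h3 := hcomp1 ⟨q, hqN⟩
      rw [hδ'def]
      calc |‖vec e p‖ - ‖vec z p‖|
          = |(‖vec e p‖ - ‖vec e (q:((Fin (Module.finrank ℝ B) → ℝ) × (Fin j → ℝ)))‖) + (‖vec e (q:((Fin (Module.finrank ℝ B) → ℝ) × (Fin j → ℝ)))‖ - ‖vec z (q:((Fin (Module.finrank ℝ B) → ℝ) × (Fin j → ℝ)))‖)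
            + (‖vec z (q:((Fin (Module.finrank ℝ B) → ℝ) × (Fin j → ℝ)))‖ - ‖vec z p‖)| := by ring_nf
        _ ≤ |‖vec e p‖ - ‖vec e (q:((Fin (Module.finrank ℝ B) → ℝ) × (Fin j → ℝ)))‖| + |‖vec e (q:((Fin (Module.finrank ℝ B) → ℝ) × (Fin j → ℝ)))‖ - ‖vec z (q:((Fin (Module.finrank ℝ B) → ℝ) × (Fin j → ℝ)))‖|
            + |‖vec z (q:((Fin (Module.finrank ℝ B) → ℝ) × (Fin j → ℝ)))‖ - ‖vec z p‖| := abs_add_three _ _ _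
        _ ≤ L * δ + δ + L * δ := by
            refine add_le_add (add_le_add h1 h3) ?_
            rwa [abs_sub_comm]
        _ = 2 * L * δ + δ := by ring
    intro p
    rcases eq_or_ne p 0 with rfl | hp0
    · simp [vec_zero]
    · have hnp : 0 < ‖p‖ := norm_pos_iff.mpr hp0
      have hq1 : ‖(‖p‖⁻¹ • p : ((Fin (Module.finrank ℝ B) → ℝ) × (Fin j → ℝ)))‖ ≤ 1 := by
        rw [norm_smul, norm_inv, norm_norm, inv_mul_cancel₀ hnp.ne']
      have h4 := hEst1 _ hq1
      rw [vec_smul, vec_smul, norm_smul, norm_smul, norm_inv, norm_norm,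
        ← mul_sub, abs_mul, abs_of_pos (inv_pos.mpr hnp)] at h4
      calc |‖vec e p‖ - ‖vec z p‖| = ‖p‖ * (‖p‖⁻¹ * |‖vec e p‖ - ‖vec z p‖|) := by
            field_simp
        _ ≤ ‖p‖ * δ' := mul_le_mul_of_nonneg_left h4 hnp.le
        _ = δ' * ‖p‖ := mul_comm _ _
  -- construct the operator
  set comb : (Fin j → Y) → ((Fin j → ℝ) →ₗ[ℝ] Y) := fun v => Fintype.linearCombination ℝ v
    with hcomb
  have hcomb_apply : ∀ v (c : Fin j → ℝ), comb v c = ∑ i, c i • v i := by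
    intro v c
    simp [hcomb, Fintype.linearCombination_apply]
  set Lmap : (↥B × (Fin j → ℝ)) →ₗ[ℝ] Y := (B.subtype).coprod (comb e) with hLmapdef
  have hLmap_apply : ∀ bt : ↥B × (Fin j → ℝ), Lmap bt = (bt.1 : Y) + ∑ i, bt.2 i • e i := by
    intro bt
    rw [hLmapdef, LinearMap.coprod_apply, hcomb_apply]
    rfl
  have hLmem : ∀ bt, Lmap bt ∈ E := by
    intro bt
    rw [hLmap_apply]
    exact E.add_mem (hBE bt.1.2) (Submodule.sum_mem _ fun i _ => E.smul_mem _ (heE i))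
  set L' : (↥B × (Fin j → ℝ)) →ₗ[ℝ] ↥E := Lmap.codRestrict E hLmem with hL'def
  have hL'coe : ∀ bt, ((L' bt : ↥E) : Y) = Lmap bt := fun bt => rfl
  have hker : ∀ bt : ↥B × (Fin j → ℝ), Lmap bt = 0 → bt = 0 := by
    rintro ⟨b, tt⟩ h0
    rw [hLmap_apply] at h0
    have ht0 : tt = 0 := by
      funext i
      have h5 := hebd (b:Y) b.2 tt i
      rw [h0, norm_zero, mul_zero] at h5
      exact abs_nonpos_iff.mp h5
    subst ht0
    simp only [Pi.zero_apply, zero_smul, Finset.sum_const_zero, add_zero] at h0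
    have : b = 0 := Subtype.ext h0
    simp [this]
  have hinj : Function.Injective L' := by
    intro x y hxy
    have h6 : L' (x - y) = 0 := by rw [map_sub, hxy, sub_self]
    have h7 : Lmap (x - y) = 0 := by
      rw [← hL'coe, h6]
      rfl
    have := hker _ h7
    rwa [sub_eq_zero] at this
  have hsurj : Function.Surjective L' := by
    intro x
    have hx : (x : Y) ∈ B ⊔ span ℝ (Set.range e) := hespan x.2
    obtain ⟨y, hy, zz, hzz, hsum⟩ := Submodule.mem_sup.mp hx
    obtain ⟨c, hc⟩ := (mem_span_range_iff_exists_fun ℝ).mp hzz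
    refine ⟨(⟨y, hy⟩, c), ?_⟩
    apply Subtype.ext
    rw [hL'coe, hLmap_apply]
    simp only
    rw [hc]
    exact hsum
  set equiv : (↥B × (Fin j → ℝ)) ≃ₗ[ℝ] ↥E := LinearEquiv.ofBijective L' ⟨hinj, hsurj⟩
    with hequivdef
  have hequiv_apply : ∀ bt, equiv bt = L' bt := fun bt => rfl
  set G : (↥B × (Fin j → ℝ)) →ₗ[ℝ] Y := (B.subtype).coprod (comb z) with hGdef
  have hG_apply : ∀ bt : ↥B × (Fin j → ℝ), G bt = (bt.1 : Y) + ∑ i, bt.2 i • z i := by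
    intro bt
    rw [hGdef, LinearMap.coprod_apply, hcomb_apply]
    rfl
  have hGmem : ∀ bt, G bt ∈ B ⊔ span ℝ U := by
    intro bt
    rw [hG_apply]
    refine Submodule.add_mem _ (Submodule.mem_sup_left bt.1.2)
      (Submodule.sum_mem _ fun i _ => Submodule.smul_mem _ _ ?_)
    exact Submodule.mem_sup_right (Submodule.subset_span (Set.mem_biUnion hwt ⟨i, rfl⟩))
  set T : ↥E →ₗ[ℝ] ↥(B ⊔ span ℝ U) := (G.codRestrict _ hGmem).comp equiv.symm.toLinearMap
    with hT
  -- decomposition facts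
  have hdec : ∀ x : ↥E, (x : Y) = ((equiv.symm x).1 : Y) + ∑ i, (equiv.symm x).2 i • e i := by
    intro x
    have h1 : equiv (equiv.symm x) = x := equiv.apply_symm_apply x
    have h2 : ((equiv (equiv.symm x) : ↥E) : Y) = Lmap (equiv.symm x) := rfl
    rw [h1] at h2
    rw [h2, hLmap_apply]
  have hTdec : ∀ x : ↥E, ((T x : Y))
      = ((equiv.symm x).1 : Y) + ∑ i, (equiv.symm x).2 i • z i := by
    intro x
    have h2 : ((T x : ↥(B ⊔ span ℝ U)) : Y) = G (equiv.symm x) := rfl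
    rw [h2, hG_apply]
  have hbs : ∀ b : ↥B, ((b : Y)) = ∑ a, bb.equivFun b a • ((bb a : Y)) := by
    intro b
    have h1 := bb.sum_equivFun b
    have h2 := congrArg (Subtype.val) h1
    rw [← h2]
    push_cast
    rfl
  have hvec_e : ∀ x : ↥E,
      (x : Y) = vec e (bb.equivFun (equiv.symm x).1, (equiv.symm x).2) := by
    intro x
    rw [hdec x, hvec]
    simp only
    rw [← hbs]
  have hvec_z : ∀ x : ↥E,
      ((T x : Y)) = vec z (bb.equivFun (equiv.symm x).1, (equiv.symm x).2) := by
    intro x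
    rw [hTdec x, hvec]
    simp only
    rw [← hbs]
  have ht_bd : ∀ x : ↥E, ∀ i, |(equiv.symm x).2 i| ≤ K * ‖(x:Y)‖ := by
    intro x i
    have h5 := hebd ((equiv.symm x).1 : Y) (equiv.symm x).1.2 (equiv.symm x).2 i
    rw [← hdec x] at h5
    rw [hK]
    exact h5
  have hsum_bd : ∀ x : ↥E, ‖∑ i, (equiv.symm x).2 i • e i‖ ≤ (j * K) * ‖(x:Y)‖ := by
    intro x
    calc ‖∑ i, (equiv.symm x).2 i • e i‖ ≤ ∑ i, ‖(equiv.symm x).2 i • e i‖ :=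
          norm_sum_le _ _
      _ ≤ ∑ _i : Fin j, K * ‖(x:Y)‖ := by
          refine Finset.sum_le_sum fun i _ => ?_
          rw [norm_smul, Real.norm_eq_abs, hen i, mul_one]
          exact ht_bd x i
      _ = (j * K) * ‖(x:Y)‖ := by
          rw [Finset.sum_const, Finset.card_univ, Fintype.card_fin, nsmul_eq_mul]
          ring
  have hb_bd : ∀ x : ↥E, ‖(equiv.symm x).1‖ ≤ (1 + j * K) * ‖(x:Y)‖ := by
    intro x
    have h5 : ((equiv.symm x).1 : Y) = (x:Y) - ∑ i, (equiv.symm x).2 i • e i := by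
      rw [hdec x]; abel
    have h6 : ‖(equiv.symm x).1‖ = ‖((equiv.symm x).1 : Y)‖ := rfl
    rw [h6, h5]
    calc ‖(x:Y) - ∑ i, (equiv.symm x).2 i • e i‖
        ≤ ‖(x:Y)‖ + ‖∑ i, (equiv.symm x).2 i • e i‖ := norm_sub_le _ _
      _ ≤ ‖(x:Y)‖ + (j * K) * ‖(x:Y)‖ := by linarith [hsum_bd x]
      _ = (1 + j * K) * ‖(x:Y)‖ := by ring
  have hp_bd : ∀ x : ↥E,
      ‖((bb.equivFun (equiv.symm x).1, (equiv.symm x).2) : ((Fin (Module.finrank ℝ B) → ℝ) × (Fin j → ℝ)))‖ ≤ K' * ‖(x:Y)‖ := by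
    intro x
    have hKx0 : 0 ≤ K' * ‖(x:Y)‖ := mul_nonneg hK'0 (norm_nonneg _)
    rw [Prod.norm_def]
    apply max_le
    · rw [pi_norm_le_iff_of_nonneg hKx0]
      intro a
      rw [Real.norm_eq_abs]
      calc |bb.equivFun (equiv.symm x).1 a| ≤ M * ‖(equiv.symm x).1‖ := hcoord _ a
        _ ≤ M * ((1 + j * K) * ‖(x:Y)‖) :=
            mul_le_mul_of_nonneg_left (hb_bd x) hM0
        _ = (M * (1 + j * K)) * ‖(x:Y)‖ := by ring
        _ ≤ K' * ‖(x:Y)‖ := by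
            refine mul_le_mul_of_nonneg_right ?_ (norm_nonneg _)
            rw [hK']
            exact le_max_right _ _
    · rw [pi_norm_le_iff_of_nonneg hKx0]
      intro i
      rw [Real.norm_eq_abs]
      calc |(equiv.symm x).2 i| ≤ K * ‖(x:Y)‖ := ht_bd x i
        _ ≤ K' * ‖(x:Y)‖ := by
            refine mul_le_mul_of_nonneg_right ?_ (norm_nonneg _)
            rw [hK']
            exact le_max_left _ _
  have hmain : ∀ x : ↥E, |‖(x:Y)‖ - ‖(T x : Y)‖| ≤ ε * ‖(x:Y)‖ := by
    intro x
    have hE9 := hEst (bb.equivFun (equiv.symm x).1, (equiv.symm x).2)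
    rw [← hvec_e x, ← hvec_z x] at hE9
    calc |‖(x:Y)‖ - ‖(T x : Y)‖|
        ≤ δ' * ‖((bb.equivFun (equiv.symm x).1, (equiv.symm x).2) : ((Fin (Module.finrank ℝ B) → ℝ) × (Fin j → ℝ)))‖ := hE9
      _ ≤ δ' * (K' * ‖(x:Y)‖) := by
          refine mul_le_mul_of_nonneg_left (hp_bd x) ?_
          rw [hδ'def]
          positivity
      _ = (δ' * K') * ‖(x:Y)‖ := by ring
      _ ≤ ε * ‖(x:Y)‖ :=
          mul_le_mul_of_nonneg_right (hkey K' hK'0 hK'S) (norm_nonneg _)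
  clear hT
  clear_value T
  refine ⟨T, ?_, ?_, ?_⟩
  · intro x hxB
    have hpair : equiv.symm x = (⟨(x:Y), hxB⟩, 0) := by
      rw [LinearEquiv.symm_apply_eq]
      apply Subtype.ext
      have h2 : ((equiv ((⟨(x:Y), hxB⟩ : ↥B), (0 : Fin j → ℝ)) : ↥E) : Y)
          = Lmap ((⟨(x:Y), hxB⟩ : ↥B), (0 : Fin j → ℝ)) := rfl
      rw [h2, hLmap_apply]
      simp
    rw [hTdec x, hpair]
    simp
  · intro x
    have h8 := abs_le.mp (hmain x)
    have hne : (0:ℝ) ≤ ‖(x:Y)‖ := norm_nonneg _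
    constructor
    · rw [sub_mul, one_mul]
      linarith only [h8.2]
    · rw [add_mul, one_mul]
      linarith only [h8.1]
  · intro x f hf
    have h9 : f ((T x : Y)) - f ((x:Y))
        = ∑ i, (equiv.symm x).2 i * (f (z i) - f (e i)) := by
      rw [hTdec x, hdec x]
      rw [map_add, map_add, map_sum, map_sum]
      simp only [map_smul, smul_eq_mul, mul_sub, Finset.sum_sub_distrib]
      ring
    rw [h9]
    have hδjK : δ * (j * K) ≤ ε := by
      calc δ * (j * K) ≤ δ' * (j * K) := by
            refine mul_le_mul_of_nonneg_right hδδ' ?_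
            positivity
        _ ≤ ε := hkey (j * K) (by positivity) hjKS
    calc |∑ i, (equiv.symm x).2 i * (f (z i) - f (e i))|
        ≤ ∑ i, |(equiv.symm x).2 i * (f (z i) - f (e i))| :=
          Finset.abs_sum_le_sum_abs _ _
      _ ≤ ∑ _i : Fin j, (K * ‖(x:Y)‖) * δ := by
          refine Finset.sum_le_sum fun i _ => ?_
          rw [abs_mul]
          refine mul_le_mul (ht_bd x i) ?_ (abs_nonneg _)
            (mul_nonneg hK0 (norm_nonneg _))
          rw [abs_sub_comm]
          exact hcomp2 f hf i
      _ = (δ * (j * K)) * ‖(x:Y)‖ := by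
          rw [Finset.sum_const, Finset.card_univ, Fintype.card_fin, nsmul_eq_mul]
          ring
      _ ≤ ε * ‖(x:Y)‖ :=
          mul_le_mul_of_nonneg_right hδjK (norm_nonneg _)

end Aux

set_option maxHeartbeats 1000000 in
set_option synthInstance.maxHeartbeats 400000 in
theorem finite_dim_lemma
    (Y : Type*) [NormedAddCommGroup Y] [NormedSpace ℝ Y] [CompleteSpace Y]
    (B : Subspace ℝ Y) [FiniteDimensional ℝ B]
    (k : ℕ) (ε : ℝ) (hε : 0 < ε) (C : Finset (Y →L[ℝ] ℝ)) :
    ∃ Z : Subspace ℝ Y, FiniteDimensional ℝ Z ∧ B ≤ Z ∧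
      ∀ E : Subspace ℝ Y, B ≤ E →
        Module.rank ℝ (E ⧸ (B.comap E.subtype)) ≤ (k : Cardinal) →
        ∃ T : E →ₗ[ℝ] Z,
          (∀ e : E, (e : Y) ∈ B → ((T e : Y) = (e : Y))) ∧
          (∀ e : E, (1 - ε) * ‖(e : Y)‖ ≤ ‖(T e : Y)‖ ∧ ‖(T e : Y)‖ ≤ (1 + ε) * ‖(e : Y)‖) ∧
          (∀ e : E, ∀ f ∈ C, |f ((T e : Y)) - f ((e : Y))| ≤ ε * ‖(e : Y)‖) := by
  classical
  choose ζ hfd hBζ hprop using fun j : ℕ => main_j B j ε hε C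
  haveI : ∀ i : ℕ, FiniteDimensional ℝ (ζ i) := hfd
  set Z := (Finset.range (k+1)).sup ζ with hZ
  haveI : FiniteDimensional ℝ Z := Submodule.finiteDimensional_finset_sup _ _
  refine ⟨Z, inferInstance,
    le_trans (hBζ 0) (Finset.le_sup (Finset.mem_range.mpr (by omega))), ?_⟩
  intro E hBE hrank
  haveI hPfd : FiniteDimensional ℝ (B.comap E.subtype) :=
    Module.Finite.equiv (Submodule.comapSubtypeEquivOfLe hBE).symm
  have hq : Module.rank ℝ (E ⧸ B.comap E.subtype) < Cardinal.aleph0 :=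
    lt_of_le_of_lt hrank (Cardinal.nat_lt_aleph0 k)
  haveI hQfd : FiniteDimensional ℝ (E ⧸ B.comap E.subtype) :=
    Module.rank_lt_aleph0_iff.mp hq
  have hrE : Module.rank ℝ ↥E < Cardinal.aleph0 := by
    rw [← Submodule.rank_quotient_add_rank (B.comap E.subtype)]
    exact Cardinal.add_lt_aleph0 hq (Module.rank_lt_aleph0 ℝ _)
  haveI hEfd : FiniteDimensional ℝ E := Module.rank_lt_aleph0_iff.mp hrE
  set j := Module.finrank ℝ (E ⧸ B.comap E.subtype) with hj
  have hjk : j ≤ k := Module.finrank_le_of_rank_le hrank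
  have hfr : Module.finrank ℝ E = Module.finrank ℝ B + j := by
    have h1 := Submodule.finrank_quotient_add_finrank (B.comap E.subtype)
    have h2 : Module.finrank ℝ (B.comap E.subtype) = Module.finrank ℝ B :=
      LinearEquiv.finrank_eq (Submodule.comapSubtypeEquivOfLe hBE)
    omega
  obtain ⟨T₀, hT1, hT2, hT3⟩ := hprop j E hBE hEfd hfr
  have hle : ζ j ≤ Z := Finset.le_sup (Finset.mem_range.mpr (by omega))
  have hcoe : ∀ x : ↥E, (((Submodule.inclusion hle).comp T₀ x : ↥Z) : Y)
      = ((T₀ x : ↥(ζ j)) : Y) := fun x => rfl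
  refine ⟨(Submodule.inclusion hle).comp T₀, ?_, ?_, ?_⟩
  · intro x hx
    rw [hcoe x]
    exact hT1 x hx
  · intro x
    rw [hcoe x]
    exact hT2 x
  · intro x f hf
    rw [hcoe x]
    exact hT3 x f hf
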